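/- Let (C_i)_{i∈I} be a finite family of nonempty closed convex subsets of a real Hilbert space H with nonempty intersection ∩_{i∈I} C_i ≠ ∅. Suppose there exist weights α_i ∈ (0,1] with Σ α_i = 1 such that Σ_{i∈I} α_i P_{C_i} is a projector onto a closed convex set. Then C_i = C_j for all i, j ∈ I. -/

import Mathlib

open RealInnerProductSpace Pointwise

variable {H : Type*} [NormedAddCommGroup H] [InnerProductSpace ℝ H] [CompleteSpace H]

/-- `P` is the metric projection (nearest-point map) onto `C`. -/
def IsProjOn (C : Set H) (P : H → H) : Prop :=
  ∀ x, P x ∈ C ∧ ∀ y ∈ C, ‖x - P x‖ ≤ ‖x - y‖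

lemma IsProjOn.var {C : Set H} {Pm : H → H} (h : IsProjOn C Pm) (hcv : Convex ℝ C)
    (x : H) : ∀ w ∈ C, ⟪x - Pm x, w - Pm x⟫ ≤ 0 := by
  have hmem := (h x).1
  rw [← norm_eq_iInf_iff_real_inner_le_zero hcv hmem]
  haveI : Nonempty C := ⟨⟨Pm x, hmem⟩⟩
  refine le_antisymm (le_ciInf fun w => (h x).2 w w.2) ?_
  refine ciInf_le ?_ (⟨Pm x, hmem⟩ : C)
  exact ⟨0, fun b hb => by obtain ⟨w, rfl⟩ := hb; exact norm_nonneg _⟩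

lemma IsProjOn.fix {C : Set H} {Pm : H → H} (h : IsProjOn C Pm) {x : H} (hx : x ∈ C) :
    Pm x = x := by
  have := (h x).2 x hx
  simp only [sub_self, norm_zero] at this
  have : ‖x - Pm x‖ = 0 := le_antisymm this (norm_nonneg _)
  rw [norm_sub_eq_zero_iff] at this
  exact this.symm

theorem stmt11 {ι : Type*} (I : Finset ι) (C : ι → Set H)
    (hne : ∀ i ∈ I, (C i).Nonempty) (hcl : ∀ i ∈ I, IsClosed (C i))
    (hcv : ∀ i ∈ I, Convex ℝ (C i))
    (hint : (⋂ i ∈ I, C i).Nonempty)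
    (P : ι → H → H) (hP : ∀ i ∈ I, IsProjOn (C i) (P i))
    (a : ι → ℝ) (ha : ∀ i ∈ I, 0 < a i ∧ a i ≤ 1) (hsum : ∑ i ∈ I, a i = 1)
    (D : Set H) (hDne : D.Nonempty) (hDcl : IsClosed D) (hDcv : Convex ℝ D)
    (hproj : IsProjOn D (fun x => ∑ i ∈ I, a i • P i x)) :
    ∀ i ∈ I, ∀ j ∈ I, C i = C j := by
  classical
  obtain ⟨z, hz⟩ := hint
  simp only [Set.mem_iInter] at hz
  -- T maps into D
  have hTD : ∀ x : H, (∑ i ∈ I, a i • P i x) ∈ D := fun x => (hproj x).1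
  -- z ∈ D
  have hTz : (∑ i ∈ I, a i • P i z) = z := by
    rw [Finset.sum_congr rfl (fun i hi => by rw [(hP i hi).fix (hz i hi)]),
      ← Finset.sum_smul, hsum, one_smul]
  have hzD : z ∈ D := hTz ▸ hTD z
  -- D ⊆ C j for every j ∈ I
  have hDC : ∀ j ∈ I, D ⊆ C j := by
    intro j hj x hx
    have hfix : (∑ i ∈ I, a i • P i x) = x := hproj.fix hx
    -- sum of a i * ‖x - P i x‖^2 ≤ 0
    have hdiff : ∑ i ∈ I, a i • (x - P i x) = 0 := by
      simp only [smul_sub]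
      rw [Finset.sum_sub_distrib, ← Finset.sum_smul, hsum, one_smul, hfix, sub_self]
    have hkey : ∑ i ∈ I, a i * ‖x - P i x‖ ^ 2 ≤ 0 := by
      have h1 : ∀ i ∈ I, a i * ‖x - P i x‖ ^ 2 ≤ a i * ⟪x - P i x, x - z⟫ := by
        intro i hi
        have hv := (hP i hi).var (hcv i hi) x z (hz i hi)
        rw [show z - P i x = (x - P i x) - (x - z) by abel, inner_sub_right,
          real_inner_self_eq_norm_sq] at hv
        have := (ha i hi).1.le
        nlinarith
      calc ∑ i ∈ I, a i * ‖x - P i x‖ ^ 2 ≤ ∑ i ∈ I, a i * ⟪x - P i x, x - z⟫ :=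
            Finset.sum_le_sum h1
        _ = ⟪∑ i ∈ I, a i • (x - P i x), x - z⟫ := by
            rw [sum_inner]
            exact Finset.sum_congr rfl fun i _ => (real_inner_smul_left _ _ _).symm
        _ = 0 := by rw [hdiff, inner_zero_left]
    have hall : ∀ i ∈ I, a i * ‖x - P i x‖ ^ 2 = 0 := by
      rw [← Finset.sum_eq_zero_iff_of_nonneg
        (fun i hi => mul_nonneg (ha i hi).1.le (sq_nonneg _))]
      exact le_antisymm hkey (Finset.sum_nonneg
        (fun i hi => mul_nonneg (ha i hi).1.le (sq_nonneg _)))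
    have := hall j hj
    have hnz := (ha j hj).1.ne'
    have : ‖x - P j x‖ = 0 := by
      rcases mul_eq_zero.1 this with h | h
      · exact absurd h hnz
      · exact pow_eq_zero_iff (by norm_num) |>.1 h
    rw [norm_sub_eq_zero_iff] at this
    exact this ▸ (hP j hj x).1
  -- C i ⊆ D for every i ∈ I
  have hCD : ∀ i ∈ I, C i ⊆ D := by
    intro i hi x hx
    set T := ∑ j ∈ I, a j • P j x with hT
    have hTmem : T ∈ D := hTD x
    have hle : ∀ j ∈ I, ‖x - P j x‖ ≤ ‖x - T‖ := fun j hj =>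
      (hP j hj x).2 T (hDC j hj hTmem)
    have hPi : P i x = x := (hP i hi).fix hx
    have hxi : ‖x - P i x‖ = 0 := by rw [hPi, sub_self, norm_zero]
    have htri : ‖x - T‖ ≤ ∑ j ∈ I, a j * ‖x - P j x‖ := by
      have : x - T = ∑ j ∈ I, a j • (x - P j x) := by
        simp only [smul_sub]
        rw [Finset.sum_sub_distrib, ← Finset.sum_smul, hsum, one_smul, hT]
      rw [this]
      calc ‖∑ j ∈ I, a j • (x - P j x)‖ ≤ ∑ j ∈ I, ‖a j • (x - P j x)‖ :=
            norm_sum_le _ _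
        _ = ∑ j ∈ I, a j * ‖x - P j x‖ := Finset.sum_congr rfl fun j hj => by
            rw [norm_smul, Real.norm_eq_abs, abs_of_pos (ha j hj).1]
    have hbound : ∑ j ∈ I, a j * ‖x - P j x‖ ≤ (1 - a i) * ‖x - T‖ := by
      rw [← Finset.sum_erase_add _ _ hi, hxi, mul_zero, add_zero]
      have : ∑ j ∈ I.erase i, a j * ‖x - P j x‖ ≤ ∑ j ∈ I.erase i, a j * ‖x - T‖ := by
        refine Finset.sum_le_sum fun j hj => ?_
        have hjI := Finset.mem_of_mem_erase hj
        exact mul_le_mul_of_nonneg_left (hle j hjI) (ha j hjI).1.le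
      calc ∑ j ∈ I.erase i, a j * ‖x - P j x‖ ≤ ∑ j ∈ I.erase i, a j * ‖x - T‖ := this
        _ = (∑ j ∈ I.erase i, a j) * ‖x - T‖ := (Finset.sum_mul _ _ _).symm
        _ = (1 - a i) * ‖x - T‖ := by
            congr 1
            have := Finset.sum_erase_add I a hi
            linarith [this, hsum]
    have hai := (ha i hi).1
    have hnorm : ‖x - T‖ = 0 := by nlinarith [norm_nonneg (x - T), htri.trans hbound]
    rw [norm_sub_eq_zero_iff] at hnorm
    exact hnorm ▸ hTmem
  intro i hi j hj
  have h1 : C i = D := le_antisymm (hCD i hi) (hDC i hi)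
  have h2 : C j = D := le_antisymm (hCD j hj) (hDC j hj)
  rw [h1, h2]
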